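/- Let R = 𝔽₂[b₁, b₂, e₃, c₄, c₅, …][ρ, x₁, x₂, w]/(x₂² + x₁²b₁). For every r ∈ R, if r·ρx₁²w lies in the principal ideal (x₁³w), then r lies in the principal ideal (x₁). Consequently, the annihilator of the class of ρx₁²w in the quotient ring R/(x₁³w) is exactly the principal ideal generated by x₁. -/

import Mathlib

/-!
STATEMENT 13: In `R = 𝔽₂[b₁, b₂, e₃, c₄, c₅, …][ρ, x₁, x₂, w]/(x₂² + x₁²b₁)`: if
`r·ρx₁²w ∈ (x₁³w)` then `r ∈ (x₁)`; consequently the annihilator of the class of `ρx₁²w`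
in `R/(x₁³w)` is exactly the principal ideal `(x₁)`.

We model the ambient polynomial ring with variable set `ℕ ⊕ Fin 4` (`Sum.inl 0, 1, 2 =
b₁, b₂, e₃`, `Sum.inl (k+3) = c_{k+4}`; `Sum.inr 0,…,3 = ρ, x₁, x₂, w`).
-/

open MvPolynomial

set_option synthInstance.maxHeartbeats 1000000
set_option maxHeartbeats 1000000

noncomputable section

namespace Stmt13

abbrev P := MvPolynomial (ℕ ⊕ Fin 4) (ZMod 2)

def b₁ : P := X (Sum.inl 0)
def b₂ : P := X (Sum.inl 1)
def e₃ : P := X (Sum.inl 2)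
def c (k : ℕ) : P := X (Sum.inl (k + 3))   -- `c k` is `c_{k+4}`
def ρ : P := X (Sum.inr 0)
def x₁ : P := X (Sum.inr 1)
def x₂ : P := X (Sum.inr 2)
def w : P := X (Sum.inr 3)

def J : Ideal P := Ideal.span {x₂ ^ 2 + x₁ ^ 2 * b₁}

abbrev R := P ⧸ J

def mk : P →+* R := Ideal.Quotient.mk J

/-- the ideal `(x₁³w)` of `R`. -/
def I : Ideal R := Ideal.span {mk (x₁ ^ 3 * w)}

abbrev E := R ⧸ I

def mkE : R →+* E := Ideal.Quotient.mk I

def ψ (i : ℕ ⊕ Fin 4) : P →ₐ[ZMod 2] P :=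
  aeval (fun j => if j = i then 0 else X j)

lemma ψ_X_self (i : ℕ ⊕ Fin 4) : ψ i (X i) = 0 := by simp [ψ]
lemma ψ_X_ne {i j : ℕ ⊕ Fin 4} (h : j ≠ i) : ψ i (X j) = X j := by simp [ψ, h]

lemma X_dvd_sub_ψ (i : ℕ ⊕ Fin 4) (f : P) : X i ∣ f - ψ i f := by
  rw [← Ideal.mem_span_singleton, ← Ideal.Quotient.eq]
  have : (Ideal.Quotient.mkₐ (ZMod 2) (Ideal.span {X i})).comp (ψ i)
      = Ideal.Quotient.mkₐ (ZMod 2) (Ideal.span {X i}) := by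
    apply MvPolynomial.algHom_ext
    intro j
    by_cases h : j = i
    · subst h
      simp only [AlgHom.comp_apply, ψ_X_self, map_zero]
      symm
      rw [Ideal.Quotient.mkₐ_eq_mk, Ideal.Quotient.eq_zero_iff_mem]
      exact Ideal.subset_span rfl
    · simp [AlgHom.comp_apply, ψ_X_ne h]
  calc Ideal.Quotient.mk (Ideal.span {X i}) f
      = (Ideal.Quotient.mkₐ (ZMod 2) (Ideal.span {X i})).comp (ψ i) f := by
        rw [this]; rfl
    _ = _ := rfl

lemma X_dvd_iff_ψ (i : ℕ ⊕ Fin 4) (f : P) : X i ∣ f ↔ ψ i f = 0 := by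
  constructor
  · rintro ⟨g, rfl⟩; rw [map_mul, ψ_X_self, zero_mul]
  · intro h
    have := X_dvd_sub_ψ i f
    rwa [h, sub_zero] at this


lemma ψ1_x₁ : ψ (Sum.inr 1) x₁ = 0 := by rw [x₁]; exact ψ_X_self _
lemma ψ1_x₂ : ψ (Sum.inr 1) x₂ = x₂ := ψ_X_ne (by simp [x₂])
lemma ψ1_b₁ : ψ (Sum.inr 1) b₁ = b₁ := ψ_X_ne (by simp)
lemma ψ1_ρ : ψ (Sum.inr 1) ρ = ρ := ψ_X_ne (by simp)
lemma ψ1_w : ψ (Sum.inr 1) w = w := ψ_X_ne (by simp)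
lemma ψ2_x₂ : ψ (Sum.inr 2) x₂ = 0 := by rw [x₂]; exact ψ_X_self _
lemma ψ2_ρ : ψ (Sum.inr 2) ρ = ρ := ψ_X_ne (by simp)
lemma ψ2_w : ψ (Sum.inr 2) w = w := ψ_X_ne (by simp)

lemma x₁_dvd_iff (f : P) : x₁ ∣ f ↔ ψ (Sum.inr 1) f = 0 := by
  rw [x₁]; exact X_dvd_iff_ψ _ _
lemma x₂_dvd_iff (f : P) : x₂ ∣ f ↔ ψ (Sum.inr 2) f = 0 := by
  rw [x₂]; exact X_dvd_iff_ψ _ _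
lemma x₁_dvd_sub (f : P) : x₁ ∣ f - ψ (Sum.inr 1) f := by
  rw [x₁]; exact X_dvd_sub_ψ _ _

lemma main (r : R) (hr : r * mk (ρ * x₁ ^ 2 * w) ∈ Ideal.span {mk (x₁ ^ 3 * w)}) :
    r ∈ Ideal.span {mk x₁} := by
  obtain ⟨p, rfl⟩ := Ideal.Quotient.mk_surjective (I := J) r
  rw [Ideal.mem_span_singleton] at hr
  obtain ⟨c', hc⟩ := hr
  obtain ⟨q, rfl⟩ := Ideal.Quotient.mk_surjective (I := J) c'
  have hc' : mk (p * (ρ * x₁ ^ 2 * w)) = mk (x₁ ^ 3 * w * q) := by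
    rw [map_mul, map_mul]; exact hc
  unfold mk at hc'
  have hJ : p * (ρ * x₁ ^ 2 * w) - x₁ ^ 3 * w * q ∈ J := Ideal.Quotient.eq.mp hc'
  rw [J, Ideal.mem_span_singleton] at hJ
  obtain ⟨s, hs⟩ := hJ
  set g : P := x₂ ^ 2 + x₁ ^ 2 * b₁ with hg
  have key : g * s = x₁ ^ 2 * (p * ρ * w - x₁ * w * q) := by rw [← hs]; ring
  have hψ1g : ψ (Sum.inr 1) g = x₂ ^ 2 := by
    rw [hg, map_add, map_mul, map_pow, map_pow, ψ1_x₁, ψ1_x₂, ψ1_b₁]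
    ring
  have hx₂ne : (x₂ : P) ^ 2 ≠ 0 := pow_ne_zero _ (X_ne_zero _)
  have hx₁ne : (x₁ : P) ≠ 0 := X_ne_zero _
  -- x₁ ∣ s
  have h1 : ψ (Sum.inr 1) s = 0 := by
    have h := congrArg (ψ (Sum.inr 1)) key
    rw [map_mul, map_mul, map_pow, hψ1g, ψ1_x₁, zero_pow (by norm_num), zero_mul] at h
    exact (mul_eq_zero.mp h).resolve_left hx₂ne
  obtain ⟨s₁, rfl⟩ := (x₁_dvd_iff s).mpr h1
  have key2 : g * s₁ = x₁ * (p * ρ * w - x₁ * w * q) := by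
    apply mul_left_cancel₀ hx₁ne
    calc x₁ * (g * s₁) = g * (x₁ * s₁) := by ring
      _ = x₁ ^ 2 * (p * ρ * w - x₁ * w * q) := key
      _ = x₁ * (x₁ * (p * ρ * w - x₁ * w * q)) := by ring
  have h2 : ψ (Sum.inr 1) s₁ = 0 := by
    have h := congrArg (ψ (Sum.inr 1)) key2
    rw [map_mul, map_mul, hψ1g, ψ1_x₁, zero_mul] at h
    exact (mul_eq_zero.mp h).resolve_left hx₂ne
  obtain ⟨s₂, rfl⟩ := (x₁_dvd_iff s₁).mpr h2
  have key3 : g * s₂ = p * ρ * w - x₁ * w * q := by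
    apply mul_left_cancel₀ hx₁ne
    calc x₁ * (g * s₂) = g * (x₁ * s₂) := by ring
      _ = x₁ * (p * ρ * w - x₁ * w * q) := key2
  have key4 : x₂ ^ 2 * ψ (Sum.inr 1) s₂ = ψ (Sum.inr 1) p * ρ * w := by
    have h := congrArg (ψ (Sum.inr 1)) key3
    rw [map_mul, hψ1g, map_sub, map_mul, map_mul, map_mul, map_mul,
      ψ1_ρ, ψ1_w, ψ1_x₁, zero_mul, zero_mul, sub_zero] at h
    exact h
  have hρw : (ρ : P) * w ≠ 0 := mul_ne_zero (X_ne_zero _) (X_ne_zero _)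
  have hx₂ : (x₂ : P) ≠ 0 := X_ne_zero _
  have h3 : ψ (Sum.inr 2) (ψ (Sum.inr 1) p) = 0 := by
    have h := congrArg (ψ (Sum.inr 2)) key4
    rw [map_mul, map_mul, map_mul, map_pow, ψ2_x₂, ψ2_ρ, ψ2_w,
      zero_pow (by norm_num), zero_mul] at h
    have h' := h.symm
    rw [mul_assoc, mul_eq_zero] at h'
    exact h'.resolve_right hρw
  obtain ⟨p₁, hp₁⟩ := (x₂_dvd_iff (ψ (Sum.inr 1) p)).mpr h3
  have key5 : x₂ * ψ (Sum.inr 1) s₂ = p₁ * ρ * w := by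
    apply mul_left_cancel₀ hx₂
    calc x₂ * (x₂ * ψ (Sum.inr 1) s₂) = x₂ ^ 2 * ψ (Sum.inr 1) s₂ := by ring
      _ = ψ (Sum.inr 1) p * ρ * w := key4
      _ = x₂ * (p₁ * ρ * w) := by rw [hp₁]; ring
  have h4 : ψ (Sum.inr 2) p₁ = 0 := by
    have h := congrArg (ψ (Sum.inr 2)) key5
    rw [map_mul, map_mul, map_mul, ψ2_x₂, ψ2_ρ, ψ2_w, zero_mul] at h
    have h' := h.symm
    rw [mul_assoc, mul_eq_zero] at h'
    exact h'.resolve_right hρw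
  obtain ⟨p₂, hp₂⟩ := (x₂_dvd_iff p₁).mpr h4
  have hψp : ψ (Sum.inr 1) p = x₂ ^ 2 * p₂ := by rw [hp₁, hp₂]; ring
  obtain ⟨u, hu⟩ := x₁_dvd_sub p
  have hpfinal : p = x₁ * u + g * p₂ - x₁ ^ 2 * b₁ * p₂ := by
    have h5 : p = x₁ * u + ψ (Sum.inr 1) p := by linear_combination hu
    rw [h5, hψp, hg]; ring
  rw [Ideal.mem_span_singleton]
  refine ⟨mk (u - x₁ * b₁ * p₂), ?_⟩
  have hgmk : mk g = 0 := by
    show Ideal.Quotient.mk J g = 0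
    rw [Ideal.Quotient.eq_zero_iff_mem]
    exact Ideal.subset_span rfl
  show mk p = mk x₁ * mk (u - x₁ * b₁ * p₂)
  rw [hpfinal]
  simp only [map_sub, map_add, map_mul, map_pow, hgmk, zero_mul]
  ring

theorem stmt_13 :
    (∀ r : R, r * mk (ρ * x₁ ^ 2 * w) ∈ Ideal.span {mk (x₁ ^ 3 * w)} →
      r ∈ Ideal.span {mk x₁}) ∧
    (∀ e : E, e * mkE (mk (ρ * x₁ ^ 2 * w)) = 0 ↔
      e ∈ Ideal.span {mkE (mk x₁)}) := by
  refine ⟨main, fun e => ⟨?_, ?_⟩⟩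
  · intro he
    obtain ⟨r, rfl⟩ := Ideal.Quotient.mk_surjective (I := I) e
    have h0 : mkE (r * mk (ρ * x₁ ^ 2 * w)) = 0 := by
      rw [map_mul]; exact he
    have hmem : r * mk (ρ * x₁ ^ 2 * w) ∈ Ideal.span {mk (x₁ ^ 3 * w)} := by
      have := Ideal.Quotient.eq_zero_iff_mem.mp h0
      rwa [I] at this
    have hr := main r hmem
    rw [Ideal.mem_span_singleton] at hr
    refine (Ideal.mem_span_singleton (α := E)).mpr ?_
    obtain ⟨d, hd⟩ := hr
    exact ⟨mkE d, by show mkE r = _; rw [hd, map_mul]⟩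
  · intro he
    replace he := (Ideal.mem_span_singleton (α := E)).mp he
    obtain ⟨d, hd⟩ := he
    have h1 : mkE (mk (x₁ ^ 3 * w)) = 0 := by
      rw [show mkE = Ideal.Quotient.mk I from rfl, Ideal.Quotient.eq_zero_iff_mem]
      exact Ideal.subset_span rfl
    have h0 : mkE (mk x₁) * mkE (mk (ρ * x₁ ^ 2 * w)) = 0 := by
      rw [← map_mul, ← map_mul,
        show (x₁ : P) * (ρ * x₁ ^ 2 * w) = ρ * (x₁ ^ 3 * w) from by ring,
        map_mul, map_mul, h1]; exact mul_zero (mkE (mk ρ))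
    calc e * mkE (mk (ρ * x₁ ^ 2 * w))
        = d * (mkE (mk x₁) * mkE (mk (ρ * x₁ ^ 2 * w))) := by rw [hd]; ring
      _ = 0 := by rw [h0]; exact mul_zero d

end Stmt13

end
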